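/- Let k ∈ ℂ, let (S, C, D) be a Jacobi triple with modulus k, and let κ ∈ ℂ with κ² = k, κ ≠ 0. On the open set U = { z ∈ ℂ : D(−iz/κ) ≠ 0 }, the triple (z ↦ i·κ·S(−iz/κ)/D(−iz/κ), z ↦ 1/D(−iz/κ), z ↦ C(−iz/κ)/D(−iz/κ)) satisfies system (1) with modulus (k − 1)/k. (This is sn(i√k x | −(1−k)/k) = i√k sd(x|k), cn = nd(x|k), dn = cd(x|k).) -/

import Mathlib

/-- A Jacobi triple with modulus `k`: the model is `(sn(·|k), cn(·|k), dn(·|k))`. -/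
def IsJacobiTriple (k : ℂ) (S C D : ℂ → ℂ) : Prop :=
  ∀ z : ℂ, HasDerivAt S (C z * D z) z ∧ HasDerivAt C (-(S z * D z)) z ∧
    HasDerivAt D (-(k * S z * C z)) z ∧
    S z ^ 2 + C z ^ 2 = 1 ∧ D z ^ 2 + k * S z ^ 2 = 1

/-- A triple `(St, Ct, Dt)` satisfies system (1) with modulus `m` on `U`:
at every point of `U` the functions are differentiable with `St′ = Ct·Dt`,
and `St² + Ct² = 1` and `Dt² + m·St² = 1` hold on `U`. -/
def SatisfiesSystem1 (m : ℂ) (St Ct Dt : ℂ → ℂ) (U : Set ℂ) : Prop :=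
  ∀ z ∈ U, HasDerivAt St (Ct z * Dt z) z ∧
    DifferentiableAt ℂ Ct z ∧ DifferentiableAt ℂ Dt z ∧
    St z ^ 2 + Ct z ^ 2 = 1 ∧ Dt z ^ 2 + m * St z ^ 2 = 1

theorem stmt_5 (k : ℂ) (S C D : ℂ → ℂ) (hJ : IsJacobiTriple k S C D)
    (κ : ℂ) (hκ : κ ^ 2 = k) (hκ0 : κ ≠ 0) :
    SatisfiesSystem1 ((k - 1) / k)
      (fun z => Complex.I * κ * S (-Complex.I * z / κ) / D (-Complex.I * z / κ))
      (fun z => 1 / D (-Complex.I * z / κ))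
      (fun z => C (-Complex.I * z / κ) / D (-Complex.I * z / κ))
      {z : ℂ | D (-Complex.I * z / κ) ≠ 0} := by
  intro z hz
  simp only [Set.mem_setOf_eq] at hz
  set w : ℂ := -Complex.I * z / κ with hw
  obtain ⟨hS, hC, hD, h1, h2⟩ := hJ w
  have hk0 : k ≠ 0 := hκ ▸ pow_ne_zero 2 hκ0
  have hIk : Complex.I ^ 2 * κ ^ 2 = -k := by
    rw [Complex.I_sq]; linear_combination -hκ
  have hg : HasDerivAt (fun z : ℂ => -Complex.I * z / κ) (-Complex.I / κ) z := by
    simpa [mul_div_assoc] using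
      ((hasDerivAt_id z).const_mul (-Complex.I)).div_const κ
  have hSg : HasDerivAt (fun z : ℂ => S (-Complex.I * z / κ))
      (C w * D w * (-Complex.I / κ)) z := hS.comp z hg
  have hCg : HasDerivAt (fun z : ℂ => C (-Complex.I * z / κ))
      (-(S w * D w) * (-Complex.I / κ)) z := hC.comp z hg
  have hDg : HasDerivAt (fun z : ℂ => D (-Complex.I * z / κ))
      (-(k * S w * C w) * (-Complex.I / κ)) z := hD.comp z hg
  refine ⟨?_, ?_, ?_, ?_, ?_⟩
  · have h := (hSg.const_mul (Complex.I * κ)).div hDg hz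
    have hval : (Complex.I * κ * (C w * D w * (-Complex.I / κ)) * D w -
        Complex.I * κ * S w * (-(k * S w * C w) * (-Complex.I / κ))) / D w ^ 2
        = 1 / D w * (C w / D w) := by
      field_simp
      linear_combination (-(Complex.I ^ 2 * C w)) * h2 + (-C w) * Complex.I_sq
    rw [hval] at h
    exact h
  · exact (differentiableAt_const 1).div hDg.differentiableAt hz
  · exact hCg.differentiableAt.div hDg.differentiableAt hz
  · show (Complex.I * κ * S w / D w) ^ 2 + (1 / D w) ^ 2 = 1
    field_simp
    linear_combination -h2 + S w ^ 2 * hIk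
  · show (C w / D w) ^ 2 + (k - 1) / k * (Complex.I * κ * S w / D w) ^ 2 = 1
    field_simp
    linear_combination k * h1 + (-k) * h2 + ((k - 1) * S w ^ 2) * hIk
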